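/- There exists λ* ∈ ℝ such that, with S_n^λ := λ·(λ − q_n)^{−1} (and q_0 := 0), all three suprema taken over nonzero integers n and over λ ∈ ℂ with Re λ ≥ λ* are finite: sup |S_n^λ| < ∞, sup |n|·|S_{n+1}^λ − S_n^λ| < ∞, and sup |n|²·|S_{n+2}^λ − 2·S_{n+1}^λ + S_n^λ| < ∞. -/

import Mathlib

open Complex Filter

/-- `A_n := sign(n)·((R^{2n}+1)/(R^{2n}−1))·α_o + α_i`. -/
noncomputable def Aseq (αi αo R : ℝ) (n : ℤ) : ℝ :=
  (n.sign : ℝ) * ((R ^ (2 * n) + 1) / (R ^ (2 * n) - 1)) * αo + αi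

/-- `μ(n) := |n|·(σ − 2(γ_o − γ_i) − σ·n²)`. -/
noncomputable def museq (σ γi γo : ℝ) (n : ℤ) : ℝ :=
  (|n| : ℝ) * (σ - 2 * (γo - γi) - σ * (n : ℝ) ^ 2)

/-- `q_n := ((A_n + i·sign(n)·B)/(A_n² + B²))·μ(n)` with `B := β_o − β_i`,
the Fourier symbol (44) of the linearized evolution operator. -/
noncomputable def qseq (αi αo βi βo R σ γi γo : ℝ) (n : ℤ) : ℂ :=
  (((Aseq αi αo R n : ℝ) : ℂ) + Complex.I * (n.sign : ℂ) * ((βo - βi : ℝ) : ℂ)) /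
    ((Aseq αi αo R n ^ 2 + (βo - βi) ^ 2 : ℝ) : ℂ) * ((museq σ γi γo n : ℝ) : ℂ)

/-- The extension of the sequence `q` by `q_0 := 0`. -/
noncomputable def qseq0 (αi αo βi βo R σ γi γo : ℝ) (n : ℤ) : ℂ :=
  if n = 0 then 0 else qseq αi αo βi βo R σ γi γo n

/-- the complex modulus as an absolute value -/
noncomputable def Complex.abs : AbsoluteValue ℂ ℝ where
  toFun z := ‖z‖
  map_mul' := norm_mul
  nonneg' := norm_nonneg
  eq_zero' _ := norm_eq_zero
  add_le' := norm_add_le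

lemma Complex.abs_apply (z : ℂ) : Complex.abs z = ‖z‖ := rfl

lemma Complex.abs_ofReal (r : ℝ) : Complex.abs (r : ℂ) = |r| := Complex.norm_real r

lemma Complex.abs_conj (z : ℂ) : Complex.abs ((starRingEnd ℂ) z) = Complex.abs z :=
  Complex.norm_conj z

lemma Complex.abs_two : Complex.abs 2 = 2 := by simp [Complex.abs_apply]

lemma Complex.abs_add_mul_I (x y : ℝ) :
    Complex.abs ((x : ℂ) + (y : ℂ) * Complex.I) = Real.sqrt (x ^ 2 + y ^ 2) := by
  rw [Complex.abs_apply, Complex.norm_def, Complex.normSq_add_mul_I]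

/-- useful: a*x ≤ b*x^3 + a*√(a/b) -/
lemma ax_cube (a b x : ℝ) (ha : 0 ≤ a) (hb : 0 < b) (hx : 0 ≤ x) :
    a * x ≤ b * x ^ 3 + a * Real.sqrt (a / b) := by
  rcases le_or_gt x (Real.sqrt (a / b)) with h | h
  · have : a * x ≤ a * Real.sqrt (a / b) := by nlinarith
    nlinarith [pow_nonneg hx 3, mul_nonneg hb.le (pow_nonneg hx 3)]
  · have hs : Real.sqrt (a/b) ^ 2 = a / b := Real.sq_sqrt (by positivity)
    have hx2 : a / b ≤ x ^ 2 := by nlinarith [Real.sqrt_nonneg (a/b)]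
    have : a ≤ b * x ^ 2 := by
      rw [div_le_iff₀ hb] at hx2; linarith [hx2]
    nlinarith [Real.sqrt_nonneg (a/b), mul_nonneg ha (Real.sqrt_nonneg (a/b))]

lemma cube_le (x : ℝ) (hx : 0 ≤ x) : (1 + x)^3 ≤ 4 * (1 + x^3) := by nlinarith [sq_nonneg (1-x), sq_nonneg x]

lemma cube_pow (m : ℕ) : ((1 : ℝ) + m)^3 ≤ 8 * 4 ^ m := by
  induction m with
  | zero => norm_num
  | succ k ih =>
    rcases Nat.eq_zero_or_pos k with rfl | hk
    · norm_num
    · have hk1 : (1:ℝ) ≤ k := by exact_mod_cast hk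
      have : ((1:ℝ) + (k+1))^3 ≤ 4 * ((1:ℝ)+k)^3 := by push_cast; nlinarith [sq_nonneg (k:ℝ), sq_nonneg ((k:ℝ)-1)]
      push_cast at ih ⊢
      calc (1 + ((k:ℝ)+1))^3 ≤ 4 * ((1:ℝ)+k)^3 := this
        _ ≤ 4 * (8 * 4 ^ k) := by nlinarith
        _ = 8 * 4 ^ (k+1) := by ring

/-- complex symbol factor -/
noncomputable def Gc (Bv a : ℝ) : ℂ :=
  (((a : ℝ) : ℂ) + Complex.I * ((Bv : ℝ) : ℂ)) / (((a ^ 2 + Bv ^ 2 : ℝ)) : ℂ)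

lemma Gc_abs {Bv a c : ℝ} (hc : 0 < c) (ha : c ≤ a) : Complex.abs (Gc Bv a) ≤ 1 / c := by
  have ha0 : 0 < a := lt_of_lt_of_le hc ha
  have hD : (0:ℝ) < a^2 + Bv^2 := by positivity
  have h1 : Complex.abs (((a : ℝ) : ℂ) + Complex.I * ((Bv:ℝ):ℂ)) = Real.sqrt (a^2 + Bv^2) := by
    rw [show ((a : ℝ) : ℂ) + Complex.I * ((Bv:ℝ):ℂ) = (a:ℝ) + (Bv:ℝ)*Complex.I by ring]
    exact Complex.abs_add_mul_I a Bv
  have habs : Complex.abs (Gc Bv a) = Real.sqrt (a^2+Bv^2) / (a^2+Bv^2) := by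
    rw [Gc, map_div₀, h1, Complex.abs_ofReal, abs_of_pos hD]
  rw [habs, div_le_div_iff₀ hD hc]
  have h2 : Real.sqrt (a^2+Bv^2) * Real.sqrt (a^2+Bv^2) = a^2+Bv^2 := Real.mul_self_sqrt hD.le
  have h3 : c ≤ Real.sqrt (a^2+Bv^2) := by
    rw [show c = Real.sqrt (c^2) by rw [Real.sqrt_sq hc.le]]
    exact Real.sqrt_le_sqrt (by nlinarith)
  nlinarith [Real.sqrt_nonneg (a^2+Bv^2)]

lemma Gc_lip {Bv a a' c : ℝ} (hc : 0 < c) (ha : c ≤ a) (ha' : c ≤ a') :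
    Complex.abs (Gc Bv a - Gc Bv a') ≤ |a - a'| / c ^ 2 := by
  have ha0 : 0 < a := lt_of_lt_of_le hc ha
  have ha0' : 0 < a' := lt_of_lt_of_le hc ha'
  have hD : (0:ℝ) < a^2 + Bv^2 := by positivity
  have hD' : (0:ℝ) < a'^2 + Bv^2 := by positivity
  have h1 : ((a:ℂ)^2 + (Bv:ℂ)^2) ≠ 0 := by
    have : (((a^2 + Bv^2 : ℝ)) : ℂ) ≠ 0 := by exact_mod_cast hD.ne'
    push_cast at this; exact this
  have h2 : ((a':ℂ)^2 + (Bv:ℂ)^2) ≠ 0 := by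
    have : (((a'^2 + Bv^2 : ℝ)) : ℂ) ≠ 0 := by exact_mod_cast hD'.ne'
    push_cast at this; exact this
  have key : Gc Bv a - Gc Bv a' =
      (((a - a' : ℝ) : ℂ)) * ((((Bv^2 - a*a' : ℝ)) : ℂ) + Complex.I * (((-(Bv*(a+a')) : ℝ)) : ℂ))
        / ((((a^2+Bv^2)*(a'^2+Bv^2) : ℝ)) : ℂ) := by
    rw [Gc, Gc]
    push_cast
    field_simp
    ring
  set P := (a^2+Bv^2)*(a'^2+Bv^2) with hP
  have hP0 : 0 < P := by positivity
  have hnum : Complex.abs ((((Bv^2 - a*a' : ℝ)) : ℂ) + Complex.I * (((-(Bv*(a+a')) : ℝ)) : ℂ))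
      = Real.sqrt P := by
    rw [show (((Bv^2 - a*a' : ℝ)) : ℂ) + Complex.I * (((-(Bv*(a+a')) : ℝ)) : ℂ)
       = ((Bv^2 - a*a' : ℝ) : ℂ) + ((-(Bv*(a+a')) : ℝ) : ℂ) * Complex.I by ring]
    rw [Complex.abs_add_mul_I]
    congr 1
    rw [hP]; ring
  have habs : Complex.abs (Gc Bv a - Gc Bv a') = |a - a'| * Real.sqrt P / P := by
    rw [key, map_div₀, map_mul, hnum, Complex.abs_ofReal, Complex.abs_ofReal,
      abs_of_pos hP0]
  rw [habs]
  have hsq : Real.sqrt P * Real.sqrt P = P := Real.mul_self_sqrt hP0.le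
  have hc2 : c^2 ≤ Real.sqrt P := by
    rw [show c^2 = Real.sqrt ((c^2)^2) by rw [Real.sqrt_sq (by positivity)]]
    apply Real.sqrt_le_sqrt
    have e1 : c^2 ≤ a^2 := by nlinarith
    have e2 : c^2 ≤ a'^2 := by nlinarith
    have e3 : a^2 ≤ a^2 + Bv^2 := by nlinarith [sq_nonneg Bv]
    have e4 : a'^2 ≤ a'^2 + Bv^2 := by nlinarith [sq_nonneg Bv]
    calc (c^2)^2 = c^2 * c^2 := by ring
      _ ≤ (a^2+Bv^2) * (a'^2+Bv^2) := by
          apply mul_le_mul (by linarith) (by linarith) (by positivity) (by positivity)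
      _ = P := hP.symm
  have ht : 0 ≤ |a - a'| * Real.sqrt P := mul_nonneg (abs_nonneg _) (Real.sqrt_nonneg _)
  rw [div_le_div_iff₀ hP0 (by positivity)]
  have h5 := mul_le_mul_of_nonneg_left hc2 ht
  calc |a-a'| * Real.sqrt P * c^2 = |a-a'| * Real.sqrt P * c^2 := rfl
    _ ≤ |a-a'| * Real.sqrt P * Real.sqrt P := by nlinarith
    _ = |a-a'| * P := by rw [mul_assoc, hsq]

section core
variable (αi αo βi βo R σ γi γo : ℝ)

/-- `R^{2(m+1)}` as a natural power. -/
noncomputable def Xp (R : ℝ) (m : ℕ) : ℝ := R ^ (2*(m+1))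

noncomputable def epsp (R : ℝ) (m : ℕ) : ℝ := 2 / (Xp R m - 1)

noncomputable def Aa (αi αo R : ℝ) (m : ℕ) : ℝ := (1 + epsp R m) * αo + αi

noncomputable def pp (σ γi γo : ℝ) (m : ℕ) : ℝ :=
  ((m:ℝ)+1) * ((σ - 2*(γo - γi)) - σ * ((m:ℝ)+1)^2)


lemma Xp_ge (hR : 2 ≤ R) (m : ℕ) : (4:ℝ)^(m+1) ≤ Xp R m := by
  calc (4:ℝ)^(m+1) = (2:ℝ)^(2*(m+1)) := by rw [pow_mul]; norm_num
    _ ≤ R^(2*(m+1)) := pow_le_pow_left₀ (by norm_num) hR _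

lemma Xp_gt_one (hR : 2 ≤ R) (m : ℕ) : (4:ℝ) ≤ Xp R m := by
  have := Xp_ge R hR m
  have h4 : (4:ℝ) ≤ 4^(m+1) := by
    calc (4:ℝ) = 4^1 := by norm_num
    _ ≤ 4^(m+1) := pow_le_pow_right₀ (by norm_num) (by omega)
  linarith

lemma Xp_mono (hR : 2 ≤ R) {m k : ℕ} (hmk : m ≤ k) : Xp R m ≤ Xp R k := by
  unfold Xp
  exact pow_le_pow_right₀ (by linarith) (by omega)

lemma epsp_pos (hR : 2 ≤ R) (m : ℕ) : 0 < epsp R m := by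
  have := Xp_gt_one R hR m
  rw [epsp]
  exact div_pos (by norm_num) (by linarith)

lemma epsp_le_one (hR : 2 ≤ R) (m : ℕ) : epsp R m ≤ 1 := by
  have := Xp_gt_one R hR m
  rw [epsp, div_le_one (by linarith)]
  linarith

lemma epsp_anti (hR : 2 ≤ R) {m k : ℕ} (hmk : m ≤ k) : epsp R k ≤ epsp R m := by
  have h1 := Xp_gt_one R hR m
  have h2 := Xp_gt_one R hR k
  have h3 := Xp_mono R hR hmk
  unfold epsp
  apply div_le_div_of_nonneg_left (by norm_num) (by linarith) (by linarith)

lemma epsp_le (hR : 2 ≤ R) (m : ℕ) : epsp R m ≤ 1 / 4^m := by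
  have h1 := Xp_ge R hR m
  have h2 : (0:ℝ) < 4^m := by positivity
  have h5 : (1:ℝ) ≤ 4^m := one_le_pow₀ (by norm_num)
  have h3 : (2:ℝ) * 4^m ≤ Xp R m - 1 := by
    have : (4:ℝ)^(m+1) = 4 * 4^m := by ring
    nlinarith
  rw [epsp, div_le_div_iff₀ (by nlinarith) h2]
  nlinarith

lemma Aa_lb (hαo : 0 < αo) (hR : 2 ≤ R) (m : ℕ) : αo + αi ≤ Aa αi αo R m := by
  have := epsp_pos R hR m
  rw [Aa]; nlinarith

lemma Aa_ub (hαo : 0 < αo) (hR : 2 ≤ R) (m : ℕ) : Aa αi αo R m ≤ 2*αo + αi := by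
  have := epsp_le_one R hR m
  rw [Aa]; nlinarith

lemma Aa_diff (hαo : 0 < αo) (hR : 2 ≤ R) {m k : ℕ} (hmk : m ≤ k) : |Aa αi αo R k - Aa αi αo R m| ≤ αo / 4^m := by
  have h1 := epsp_anti R hR hmk
  have h2 := epsp_pos R hR k
  have h3 := epsp_le R hR m
  have : Aa αi αo R k - Aa αi αo R m = (epsp R k - epsp R m) * αo := by rw [Aa, Aa]; ring
  rw [this, abs_of_nonpos (by nlinarith), div_eq_mul_inv]
  have h4 : (0:ℝ) < 4^m := by positivity
  rw [one_div] at h3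
  nlinarith [mul_le_mul_of_nonneg_right (sub_le_sub_right h3 (epsp R k)) hαo.le]

end core

section link
variable (αi αo βi βo R σ γi γo : ℝ)

lemma zpow_cast_lemma (R : ℝ) (m : ℕ) : R ^ ((2:ℤ) * ((m:ℤ)+1)) = Xp R m := by
  rw [show (2:ℤ) * ((m:ℤ)+1) = ((2*(m+1) : ℕ) : ℤ) by push_cast; ring, zpow_natCast, Xp]

lemma Aseq_pos (hR : 2 ≤ R) (m : ℕ) : Aseq αi αo R ((m:ℤ)+1) = Aa αi αo R m := by
  have hX := Xp_gt_one R hR m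
  have h1 : Xp R m - 1 ≠ 0 := by intro h; nlinarith
  rw [Aseq, Int.sign_eq_one_of_pos (by positivity), zpow_cast_lemma, Aa, epsp,
    show (Xp R m + 1)/(Xp R m - 1) = 1 + 2/(Xp R m - 1) by field_simp; ring]
  push_cast
  ring

lemma museq_pos (m : ℕ) : museq σ γi γo ((m:ℤ)+1) = pp σ γi γo m := by
  rw [museq, pp]
  push_cast
  rw [abs_of_pos (by positivity : (0:ℝ) < (m:ℝ)+1)]

lemma qseq_pos (hR : 2 ≤ R) (m : ℕ) :
    qseq αi αo βi βo R σ γi γo ((m:ℤ)+1)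
      = Gc (βo - βi) (Aa αi αo R m) * ((pp σ γi γo m : ℝ) : ℂ) := by
  rw [qseq, Aseq_pos αi αo R hR m, museq_pos σ γi γo m, Gc,
    Int.sign_eq_one_of_pos (by positivity : (0:ℤ) < (m:ℤ)+1)]
  push_cast
  ring

lemma Aseq_neg (hR : 2 ≤ R) (m : ℕ) :
    Aseq αi αo R (-((m:ℤ)+1)) = Aseq αi αo R ((m:ℤ)+1) := by
  have hX := Xp_gt_one R hR m
  have h0 : Xp R m ≠ 0 := by linarith
  have h1 : Xp R m - 1 ≠ 0 := by linarith
  rw [Aseq, Aseq, Int.sign_eq_one_of_pos (by positivity : (0:ℤ) < (m:ℤ)+1),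
    Int.sign_neg, Int.sign_eq_one_of_pos (by positivity : (0:ℤ) < (m:ℤ)+1)]
  rw [show (2:ℤ) * (-((m:ℤ)+1)) = -((2:ℤ)*((m:ℤ)+1)) by ring, zpow_neg, zpow_cast_lemma]
  have hinv : (Xp R m)⁻¹ - 1 ≠ 0 := by
    rw [sub_ne_zero]
    intro h
    have : Xp R m = 1 := by
      field_simp at h
      linarith [h]
    linarith
  push_cast
  have h2 : (1:ℝ) - Xp R m ≠ 0 := by intro h; apply h1; linarith
  have key : ((Xp R m)⁻¹ + 1) / ((Xp R m)⁻¹ - 1) = -((Xp R m + 1) / (Xp R m - 1)) := by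
    field_simp
    ring
  rw [key]
  ring

lemma museq_neg (n : ℤ) : museq σ γi γo (-n) = museq σ γi γo n := by
  rw [museq, museq]
  push_cast
  rw [abs_neg]
  ring

lemma qseq_neg (hR : 2 ≤ R) (m : ℕ) :
    qseq αi αo βi βo R σ γi γo (-((m:ℤ)+1))
      = (starRingEnd ℂ) (qseq αi αo βi βo R σ γi γo ((m:ℤ)+1)) := by
  rw [qseq, qseq, Aseq_neg αi αo R hR m, museq_neg σ γi γo,
    Int.sign_neg, Int.sign_eq_one_of_pos (by positivity : (0:ℤ) < (m:ℤ)+1)]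
  simp only [map_mul, map_div₀, map_add, Complex.conj_ofReal, Complex.conj_I, map_one]
  push_cast
  simp only [map_one]
  ring

lemma Gc_mul_re (Bv a μ : ℝ) (hD : a^2 + Bv^2 ≠ 0) :
    (Gc Bv a * ((μ:ℝ):ℂ)).re = a * μ / (a^2 + Bv^2) := by
  have hDc : ((a:ℂ)^2 + (Bv:ℂ)^2) ≠ 0 := by
    have : (((a^2 + Bv^2 : ℝ)) : ℂ) ≠ 0 := by exact_mod_cast hD
    push_cast at this; exact this
  rw [show Gc Bv a * ((μ:ℝ):ℂ)
      = (((a*μ/(a^2+Bv^2) : ℝ)) : ℂ) + (((Bv*μ/(a^2+Bv^2) : ℝ)) : ℂ) * Complex.I by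
    rw [Gc]; push_cast; field_simp]
  simp only [Complex.add_re, Complex.mul_re, Complex.I_re, Complex.I_im,
    Complex.ofReal_re, Complex.ofReal_im]
  ring

end link

section ppbounds
variable (σ γi γo : ℝ)

lemma pp_abs (hσ : 0 < σ) (m : ℕ) :
    |pp σ γi γo m| ≤ (|σ - 2*(γo - γi)| + σ) * ((m:ℝ)+1)^3 := by
  set t : ℝ := (m:ℝ)+1 with ht
  have ht1 : 1 ≤ t := by rw [ht]; have : (0:ℝ) ≤ m := Nat.cast_nonneg m; linarith
  set d : ℝ := σ - 2*(γo - γi) with hd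
  have h1 : |pp σ γi γo m| ≤ t * (|d| + σ * t^2) := by
    rw [pp, abs_mul, abs_of_pos (by linarith : (0:ℝ) < t)]
    apply mul_le_mul_of_nonneg_left _ (by linarith)
    calc |d - σ * t^2| ≤ |d| + |σ * t^2| := abs_sub _ _
      _ = |d| + σ * t^2 := by rw [abs_of_pos (mul_pos hσ (show (0:ℝ) < t^2 by nlinarith))]
  calc |pp σ γi γo m| ≤ t * (|d| + σ * t^2) := h1
    _ ≤ (|d| + σ) * t^3 := by
        nlinarith [mul_nonneg (abs_nonneg d) (show (0:ℝ) ≤ t^3 - t by nlinarith)]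

lemma pp_diff (hσ : 0 < σ) (m : ℕ) :
    |pp σ γi γo (m+1) - pp σ γi γo m| ≤ (|σ - 2*(γo - γi)| + 7*σ) * ((m:ℝ)+2)^2 := by
  set t : ℝ := (m:ℝ)+1 with ht
  have ht1 : 1 ≤ t := by rw [ht]; have : (0:ℝ) ≤ m := Nat.cast_nonneg m; linarith
  set d : ℝ := σ - 2*(γo - γi) with hd
  have key : pp σ γi γo (m+1) - pp σ γi γo m = d - σ * (3*t^2 + 3*t + 1) := by
    rw [pp, pp, hd, ht]; push_cast; ring
  rw [key, show ((m:ℝ)+2) = t + 1 by rw [ht]; ring]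
  calc |d - σ * (3*t^2+3*t+1)| ≤ |d| + |σ * (3*t^2+3*t+1)| := abs_sub _ _
    _ = |d| + σ * (3*t^2+3*t+1) := by
        rw [abs_of_pos (mul_pos hσ (show (0:ℝ) < 3*t^2+3*t+1 by nlinarith))]
    _ ≤ (|d| + 7*σ) * (t+1)^2 := by
        nlinarith [mul_nonneg (abs_nonneg d) (show (0:ℝ) ≤ (t+1)^2 - 1 by nlinarith)]

lemma pp_dd (hσ : 0 < σ) (m : ℕ) :
    |pp σ γi γo (m+2) - 2 * pp σ γi γo (m+1) + pp σ γi γo m| ≤ 6*σ*((m:ℝ)+2) := by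
  have key : pp σ γi γo (m+2) - 2 * pp σ γi γo (m+1) + pp σ γi γo m
      = -(6*σ*((m:ℝ)+2)) := by
    rw [pp, pp, pp]; push_cast; ring
  rw [key, abs_neg, abs_of_pos (by positivity)]

end ppbounds

section coreq
variable (αi αo βi βo R σ γi γo : ℝ)

lemma q_abs_pos (hαi : 0 < αi) (hαo : 0 < αo) (hR : 2 ≤ R) (hσ : 0 < σ) (m : ℕ) :
    Complex.abs (qseq αi αo βi βo R σ γi γo ((m:ℤ)+1))
      ≤ ((|σ - 2*(γo - γi)| + σ)/(αo+αi)) * ((m:ℝ)+1)^3 := by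
  have hc : (0:ℝ) < αo + αi := by linarith
  rw [qseq_pos αi αo βi βo R σ γi γo hR m, map_mul, Complex.abs_ofReal]
  have h1 : Complex.abs (Gc (βo-βi) (Aa αi αo R m)) ≤ 1/(αo+αi) :=
    Gc_abs hc (Aa_lb αi αo R hαo hR m)
  have h2 := pp_abs σ γi γo hσ m
  calc Complex.abs (Gc (βo-βi) (Aa αi αo R m)) * |pp σ γi γo m|
      ≤ (1/(αo+αi)) * ((|σ - 2*(γo - γi)| + σ) * ((m:ℝ)+1)^3) :=
        mul_le_mul h1 h2 (abs_nonneg _) (by positivity)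
    _ = ((|σ - 2*(γo - γi)| + σ)/(αo+αi)) * ((m:ℝ)+1)^3 := by ring

lemma q_re_pos (hαi : 0 < αi) (hαo : 0 < αo) (hR : 2 ≤ R) (hσ : 0 < σ) (m : ℕ) :
    (qseq αi αo βi βo R σ γi γo ((m:ℤ)+1)).re
      ≤ (1/(αo+αi)) * |σ - 2*(γo - γi)| * ((m:ℝ)+1)
        - ((αo+αi)/((2*αo+αi)^2+(βo-βi)^2)) * σ * ((m:ℝ)+1)^3 := by
  have hc : (0:ℝ) < αo + αi := by linarith
  have hA1 := Aa_lb αi αo R hαo hR m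
  have hA2 := Aa_ub αi αo R hαo hR m
  set A := Aa αi αo R m with hA
  have hA0 : 0 < A := lt_of_lt_of_le hc hA1
  have hD : (0:ℝ) < A^2 + (βo-βi)^2 := by positivity
  rw [qseq_pos αi αo βi βo R σ γi γo hR m, Gc_mul_re _ _ _ hD.ne']
  set t : ℝ := (m:ℝ)+1 with ht
  have ht1 : (1:ℝ) ≤ t := by rw [ht]; have : (0:ℝ) ≤ m := Nat.cast_nonneg m; linarith
  set d : ℝ := σ - 2*(γo - γi) with hd
  have hpp : pp σ γi γo m = t * d - σ * t^3 := by rw [pp, ht, hd]; ring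
  set r : ℝ := A / (A^2 + (βo-βi)^2) with hr
  have hr0 : 0 < r := by positivity
  have hrmax : r ≤ 1/(αo+αi) := by
    rw [hr, div_le_div_iff₀ hD hc]
    nlinarith [sq_nonneg (βo-βi), sq_nonneg (A - (αo+αi))]
  have hrmin : (αo+αi)/((2*αo+αi)^2+(βo-βi)^2) ≤ r := by
    rw [hr, div_le_div_iff₀ (by positivity) hD]
    nlinarith [mul_nonneg (sub_nonneg.mpr hA1) (sq_nonneg (βo-βi)),
      mul_nonneg hA0.le (sub_nonneg.mpr (mul_le_mul
        (show αo+αi ≤ 2*αo+αi by linarith) hA2 hA0.le (by positivity)))]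
  have key : A * pp σ γi γo m / (A^2 + (βo-βi)^2) = r * (t*d) - r * (σ * t^3) := by
    rw [hpp, hr]; ring
  rw [key]
  have e1 : r * (t*d) ≤ (1/(αo+αi)) * |d| * t := by
    have : r * (t*d) ≤ r * (t*|d|) := by
      apply mul_le_mul_of_nonneg_left _ hr0.le
      exact mul_le_mul_of_nonneg_left (le_abs_self d) (by linarith)
    calc r * (t*d) ≤ r * (t*|d|) := this
      _ ≤ (1/(αo+αi)) * (t*|d|) := by
          apply mul_le_mul_of_nonneg_right hrmax
          positivity
      _ = (1/(αo+αi)) * |d| * t := by ring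
  have e2 : ((αo+αi)/((2*αo+αi)^2+(βo-βi)^2)) * (σ * t^3) ≤ r * (σ * t^3) := by
    apply mul_le_mul_of_nonneg_right hrmin
    positivity
  linarith

lemma q_diff_pos (hαi : 0 < αi) (hαo : 0 < αo) (hR : 2 ≤ R) (hσ : 0 < σ) (m : ℕ) :
    Complex.abs (qseq αi αo βi βo R σ γi γo ((m:ℤ)+2) - qseq αi αo βi βo R σ γi γo ((m:ℤ)+1))
      ≤ ((|σ - 2*(γo - γi)| + 7*σ)/(αo+αi) + 8*αo*(|σ - 2*(γo - γi)| + σ)/(αo+αi)^2)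
          * ((m:ℝ)+2)^2 := by
  have hc : (0:ℝ) < αo + αi := by linarith
  set d : ℝ := σ - 2*(γo - γi) with hd
  have e1 : ((m:ℤ)+2) = (((m+1:ℕ)):ℤ)+1 := by push_cast; ring
  rw [e1, qseq_pos αi αo βi βo R σ γi γo hR (m+1), qseq_pos αi αo βi βo R σ γi γo hR m]
  set G1 := Gc (βo-βi) (Aa αi αo R (m+1)) with hG1
  set G0 := Gc (βo-βi) (Aa αi αo R m) with hG0
  have key : G1 * ((pp σ γi γo (m+1) : ℝ) : ℂ) - G0 * ((pp σ γi γo m : ℝ) : ℂ)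
      = G1 * (((pp σ γi γo (m+1) - pp σ γi γo m : ℝ)) : ℂ)
        + (G1 - G0) * ((pp σ γi γo m : ℝ) : ℂ) := by push_cast; ring
  rw [key]
  have b1 : Complex.abs G1 ≤ 1/(αo+αi) := Gc_abs hc (Aa_lb αi αo R hαo hR (m+1))
  have b2 := pp_diff σ γi γo hσ m
  have b3 : Complex.abs (G1 - G0) ≤ (αo/4^m)/(αo+αi)^2 := by
    calc Complex.abs (G1 - G0) ≤ |Aa αi αo R (m+1) - Aa αi αo R m|/(αo+αi)^2 :=
          Gc_lip hc (Aa_lb αi αo R hαo hR (m+1)) (Aa_lb αi αo R hαo hR m)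
      _ ≤ (αo/4^m)/(αo+αi)^2 := by
          apply div_le_div_of_nonneg_right ?_ (by positivity)
          exact Aa_diff αi αo R hαo hR (Nat.le_succ m)
  have b4 : |pp σ γi γo m| ≤ (|d|+σ) * (8 * 4^m) := by
    calc |pp σ γi γo m| ≤ (|d|+σ) * ((m:ℝ)+1)^3 := pp_abs σ γi γo hσ m
      _ ≤ (|d|+σ) * (8 * 4^m) := by
          apply mul_le_mul_of_nonneg_left _ (by positivity)
          have := cube_pow m
          linarith [this]
  have habs : Complex.abs (G1 * (((pp σ γi γo (m+1) - pp σ γi γo m : ℝ)) : ℂ)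
        + (G1 - G0) * ((pp σ γi γo m : ℝ) : ℂ))
      ≤ Complex.abs G1 * |pp σ γi γo (m+1) - pp σ γi γo m|
        + Complex.abs (G1 - G0) * |pp σ γi γo m| := by
    calc _ ≤ Complex.abs (G1 * (((pp σ γi γo (m+1) - pp σ γi γo m : ℝ)) : ℂ))
          + Complex.abs ((G1 - G0) * ((pp σ γi γo m : ℝ) : ℂ)) := Complex.abs.add_le _ _
      _ = _ := by rw [map_mul, map_mul, Complex.abs_ofReal, Complex.abs_ofReal]
  have hm2 : (1:ℝ) ≤ ((m:ℝ)+2)^2 := by nlinarith [Nat.cast_nonneg (α := ℝ) m]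
  have h4m : (0:ℝ) < 4^m := by positivity
  calc Complex.abs _ ≤ Complex.abs G1 * |pp σ γi γo (m+1) - pp σ γi γo m|
        + Complex.abs (G1 - G0) * |pp σ γi γo m| := habs
    _ ≤ (1/(αo+αi)) * ((|d| + 7*σ) * ((m:ℝ)+2)^2)
        + ((αo/4^m)/(αo+αi)^2) * ((|d|+σ) * (8 * 4^m)) := by
        apply add_le_add
        · exact mul_le_mul b1 b2 (abs_nonneg _) (by positivity)
        · exact mul_le_mul b3 b4 (abs_nonneg _) (by positivity)
    _ = ((|d| + 7*σ)/(αo+αi)) * ((m:ℝ)+2)^2 + 8*αo*(|d|+σ)/(αo+αi)^2 := by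
        field_simp
    _ ≤ ((|d| + 7*σ)/(αo+αi)) * ((m:ℝ)+2)^2
        + 8*αo*(|d|+σ)/(αo+αi)^2 * ((m:ℝ)+2)^2 := by
        have : (0:ℝ) ≤ 8*αo*(|d|+σ)/(αo+αi)^2 := by positivity
        nlinarith
    _ = ((|d| + 7*σ)/(αo+αi) + 8*αo*(|d|+σ)/(αo+αi)^2) * ((m:ℝ)+2)^2 := by ring

lemma q_dd_pos (hαi : 0 < αi) (hαo : 0 < αo) (hR : 2 ≤ R) (hσ : 0 < σ) (m : ℕ) :
    Complex.abs (qseq αi αo βi βo R σ γi γo ((m:ℤ)+3)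
        - 2 * qseq αi αo βi βo R σ γi γo ((m:ℤ)+2) + qseq αi αo βi βo R σ γi γo ((m:ℤ)+1))
      ≤ (6*σ/(αo+αi) + 24*αo*(|σ - 2*(γo - γi)| + σ)/(αo+αi)^2) * ((m:ℝ)+2) := by
  have hc : (0:ℝ) < αo + αi := by linarith
  set d : ℝ := σ - 2*(γo - γi) with hd
  have e1 : ((m:ℤ)+2) = (((m+1:ℕ)):ℤ)+1 := by push_cast; ring
  have e2 : ((m:ℤ)+3) = (((m+2:ℕ)):ℤ)+1 := by push_cast; ring
  rw [e1, e2, qseq_pos αi αo βi βo R σ γi γo hR (m+2),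
    qseq_pos αi αo βi βo R σ γi γo hR (m+1), qseq_pos αi αo βi βo R σ γi γo hR m]
  set G2 := Gc (βo-βi) (Aa αi αo R (m+2)) with hG2
  set G1 := Gc (βo-βi) (Aa αi αo R (m+1)) with hG1
  set G0 := Gc (βo-βi) (Aa αi αo R m) with hG0
  set p2 := pp σ γi γo (m+2) with hp2
  set p1 := pp σ γi γo (m+1) with hp1
  set p0 := pp σ γi γo m with hp0
  have key : G2 * ((p2 : ℝ) : ℂ) - 2 * (G1 * ((p1 : ℝ) : ℂ)) + G0 * ((p0 : ℝ) : ℂ)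
      = G2 * (((p2 - 2*p1 + p0 : ℝ)) : ℂ) + (G2 - G1) * (((2*p1 : ℝ)) : ℂ)
        + (G0 - G2) * ((p0 : ℝ) : ℂ) := by push_cast; ring
  have key2 : G2 * ((p2 : ℝ) : ℂ) - 2 * (G1 * ((p1 : ℝ) : ℂ)) + G0 * ((p0 : ℝ) : ℂ)
      = G2 * ((p2 : ℝ) : ℂ) - 2 * (G1 * ((p1 : ℝ) : ℂ)) + G0 * ((p0 : ℝ) : ℂ) := rfl
  rw [show G2 * ((p2 : ℝ) : ℂ) - 2 * (G1 * ((p1 : ℝ) : ℂ)) + G0 * ((p0 : ℝ) : ℂ)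
      = G2 * (((p2 - 2*p1 + p0 : ℝ)) : ℂ) + (G2 - G1) * (((2*p1 : ℝ)) : ℂ)
        + (G0 - G2) * ((p0 : ℝ) : ℂ) from key]
  have b1 : Complex.abs G2 ≤ 1/(αo+αi) := Gc_abs hc (Aa_lb αi αo R hαo hR (m+2))
  have b2 : |p2 - 2*p1 + p0| ≤ 6*σ*((m:ℝ)+2) := pp_dd σ γi γo hσ m
  have b3 : Complex.abs (G2 - G1) ≤ (αo/4^(m+1))/(αo+αi)^2 := by
    calc Complex.abs (G2 - G1) ≤ |Aa αi αo R (m+2) - Aa αi αo R (m+1)|/(αo+αi)^2 :=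
          Gc_lip hc (Aa_lb αi αo R hαo hR (m+2)) (Aa_lb αi αo R hαo hR (m+1))
      _ ≤ (αo/4^(m+1))/(αo+αi)^2 := by
          apply div_le_div_of_nonneg_right ?_ (by positivity)
          exact Aa_diff αi αo R hαo hR (Nat.le_succ (m+1))
  have b4 : |(2*p1 : ℝ)| ≤ (|d|+σ) * (16 * 4^(m+1)) := by
    rw [abs_mul, abs_of_pos (by norm_num : (0:ℝ) < 2)]
    have h1 : |p1| ≤ (|d|+σ) * (((m:ℝ))+2)^3 := by
      have h := pp_abs σ γi γo hσ (m+1)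
      push_cast at h
      calc |p1| ≤ (|d|+σ) * (((m:ℝ))+1+1)^3 := h
        _ = (|d|+σ) * (((m:ℝ))+2)^3 := by ring
    have h2 : (((m:ℝ))+2)^3 ≤ 8*4^(m+1) := by
      have h := cube_pow (m+1)
      push_cast at h
      calc (((m:ℝ))+2)^3 = (1+((m:ℝ)+1))^3 := by ring
        _ ≤ 8*4^(m+1) := h
    have h3 : (|d|+σ) * (((m:ℝ))+2)^3 ≤ (|d|+σ)*(8*4^(m+1)) :=
      mul_le_mul_of_nonneg_left h2 (by positivity)
    linarith
  have b5 : Complex.abs (G0 - G2) ≤ (αo/4^m)/(αo+αi)^2 := by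
    calc Complex.abs (G0 - G2) ≤ |Aa αi αo R m - Aa αi αo R (m+2)|/(αo+αi)^2 :=
          Gc_lip hc (Aa_lb αi αo R hαo hR m) (Aa_lb αi αo R hαo hR (m+2))
      _ ≤ (αo/4^m)/(αo+αi)^2 := by
          apply div_le_div_of_nonneg_right ?_ (by positivity)
          rw [abs_sub_comm]
          exact Aa_diff αi αo R hαo hR (by omega)
  have b6 : |p0| ≤ (|d|+σ) * (8 * 4^m) := by
    calc |p0| ≤ (|d|+σ) * ((m:ℝ)+1)^3 := pp_abs σ γi γo hσ m
      _ ≤ (|d|+σ) * (8 * 4^m) := by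
          apply mul_le_mul_of_nonneg_left _ (by positivity)
          linarith [cube_pow m]
  have habs : Complex.abs (G2 * (((p2 - 2*p1 + p0 : ℝ)) : ℂ) + (G2 - G1) * (((2*p1 : ℝ)) : ℂ)
        + (G0 - G2) * ((p0 : ℝ) : ℂ))
      ≤ Complex.abs G2 * |p2 - 2*p1 + p0| + Complex.abs (G2 - G1) * |(2*p1 : ℝ)|
        + Complex.abs (G0 - G2) * |p0| := by
    calc _ ≤ Complex.abs (G2 * (((p2 - 2*p1 + p0 : ℝ)) : ℂ) + (G2 - G1) * (((2*p1 : ℝ)) : ℂ))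
          + Complex.abs ((G0 - G2) * ((p0 : ℝ) : ℂ)) := Complex.abs.add_le _ _
      _ ≤ Complex.abs (G2 * (((p2 - 2*p1 + p0 : ℝ)) : ℂ))
          + Complex.abs ((G2 - G1) * (((2*p1 : ℝ)) : ℂ))
          + Complex.abs ((G0 - G2) * ((p0 : ℝ) : ℂ)) := by
            have := Complex.abs.add_le (G2 * (((p2 - 2*p1 + p0 : ℝ)) : ℂ))
              ((G2 - G1) * (((2*p1 : ℝ)) : ℂ))
            linarith
      _ = _ := by rw [map_mul, map_mul, map_mul, Complex.abs_ofReal, Complex.abs_ofReal,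
            Complex.abs_ofReal]
  have h4m : (0:ℝ) < 4^m := by positivity
  have h4m1 : (0:ℝ) < 4^(m+1) := by positivity
  have hm2 : (1:ℝ) ≤ (m:ℝ)+2 := by nlinarith [Nat.cast_nonneg (α := ℝ) m]
  calc Complex.abs _ ≤ Complex.abs G2 * |p2 - 2*p1 + p0| + Complex.abs (G2 - G1) * |(2*p1 : ℝ)|
        + Complex.abs (G0 - G2) * |p0| := habs
    _ ≤ (1/(αo+αi)) * (6*σ*((m:ℝ)+2)) + ((αo/4^(m+1))/(αo+αi)^2) * ((|d|+σ) * (16 * 4^(m+1)))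
        + ((αo/4^m)/(αo+αi)^2) * ((|d|+σ) * (8 * 4^m)) := by
        apply add_le_add (add_le_add _ _) _
        · exact mul_le_mul b1 b2 (abs_nonneg _) (by positivity)
        · exact mul_le_mul b3 b4 (abs_nonneg _) (by positivity)
        · exact mul_le_mul b5 b6 (abs_nonneg _) (by positivity)
    _ = (6*σ/(αo+αi)) * ((m:ℝ)+2) + 24*αo*(|d|+σ)/(αo+αi)^2 := by
        field_simp
        ring
    _ ≤ (6*σ/(αo+αi)) * ((m:ℝ)+2) + 24*αo*(|d|+σ)/(αo+αi)^2 * ((m:ℝ)+2) := by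
        have : (0:ℝ) ≤ 24*αo*(|d|+σ)/(αo+αi)^2 := by positivity
        nlinarith
    _ = (6*σ/(αo+αi) + 24*αo*(|d|+σ)/(αo+αi)^2) * ((m:ℝ)+2) := by ring

end coreq

noncomputable def KqC (αi αo σ γi γo : ℝ) : ℝ := (|σ - 2*(γo - γi)| + σ)/(αo+αi)

noncomputable def K2C (αi αo σ γi γo : ℝ) : ℝ :=
  (|σ - 2*(γo - γi)| + 7*σ)/(αo+αi) + 8*αo*(|σ - 2*(γo - γi)| + σ)/(αo+αi)^2
    + 8*KqC αi αo σ γi γo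

noncomputable def K3C (αi αo σ γi γo : ℝ) : ℝ :=
  6*σ/(αo+αi) + 24*αo*(|σ - 2*(γo - γi)| + σ)/(αo+αi)^2 + 108*KqC αi αo σ γi γo

section globalq
variable (αi αo βi βo R σ γi γo : ℝ)

lemma KqC_pos (hαi : 0 < αi) (hαo : 0 < αo) (hσ : 0 < σ) : 0 < KqC αi αo σ γi γo := by
  unfold KqC; positivity

lemma K2C_pos (hαi : 0 < αi) (hαo : 0 < αo) (hσ : 0 < σ) : 0 < K2C αi αo σ γi γo := by
  have := KqC_pos αi αo σ γi γo hαi hαo hσ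
  unfold K2C; positivity

lemma K3C_pos (hαi : 0 < αi) (hαo : 0 < αo) (hσ : 0 < σ) : 0 < K3C αi αo σ γi γo := by
  have := KqC_pos αi αo σ γi γo hαi hαo hσ
  unfold K3C; positivity

lemma int_pos_rep {n : ℤ} (hn : 1 ≤ n) : ∃ m : ℕ, n = (m:ℤ)+1 :=
  ⟨(n-1).toNat, by omega⟩

lemma q_abs_pos' (hαi : 0 < αi) (hαo : 0 < αo) (hR : 2 ≤ R) (hσ : 0 < σ) (m : ℕ) :
    Complex.abs (qseq αi αo βi βo R σ γi γo ((m:ℤ)+1))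
      ≤ KqC αi αo σ γi γo * ((m:ℝ)+1)^3 := q_abs_pos αi αo βi βo R σ γi γo hαi hαo hR hσ m

lemma q0_abs (hαi : 0 < αi) (hαo : 0 < αo) (hR : 2 ≤ R) (hσ : 0 < σ) (n : ℤ) :
    Complex.abs (qseq0 αi αo βi βo R σ γi γo n)
      ≤ KqC αi αo σ γi γo * (1+|(n:ℝ)|)^3 := by
  have hK := KqC_pos αi αo σ γi γo hαi hαo hσ
  have mono : ∀ m : ℕ, KqC αi αo σ γi γo * ((m:ℝ)+1)^3
      ≤ KqC αi αo σ γi γo * (1+((m:ℝ)+1))^3 := by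
    intro m
    apply mul_le_mul_of_nonneg_left _ hK.le
    apply pow_le_pow_left₀ (by positivity)
    linarith
  rcases lt_trichotomy n 0 with hn | rfl | hn
  · obtain ⟨m, hm⟩ := int_pos_rep (by omega : 1 ≤ -n)
    have hn' : n = -((m:ℤ)+1) := by omega
    subst hn'
    rw [qseq0, if_neg (by omega), qseq_neg αi αo βi βo R σ γi γo hR m, Complex.abs_conj]
    have h1 := q_abs_pos' αi αo βi βo R σ γi γo hαi hαo hR hσ m
    have h2 : |((-((m:ℤ)+1) : ℤ) : ℝ)| = (m:ℝ)+1 := by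
      push_cast; rw [abs_neg, abs_of_pos (by positivity)]
    rw [h2]
    exact le_trans h1 (mono m)
  · simp [qseq0]
    positivity
  · obtain ⟨m, rfl⟩ := int_pos_rep hn
    rw [qseq0, if_neg (by omega)]
    have h2 : |(((m:ℤ)+1 : ℤ) : ℝ)| = (m:ℝ)+1 := by
      push_cast; rw [abs_of_pos (by positivity)]
    rw [h2]
    exact le_trans (q_abs_pos' αi αo βi βo R σ γi γo hαi hαo hR hσ m) (mono m)

lemma q0_re (hαi : 0 < αi) (hαo : 0 < αo) (hR : 2 ≤ R) (hσ : 0 < σ) (n : ℤ) :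
    (qseq0 αi αo βi βo R σ γi γo n).re
      ≤ (1/(αo+αi)) * |σ - 2*(γo - γi)| * |(n:ℝ)|
        - ((αo+αi)/((2*αo+αi)^2+(βo-βi)^2)) * σ * |(n:ℝ)|^3 := by
  rcases lt_trichotomy n 0 with hn | rfl | hn
  · obtain ⟨m, hm⟩ := int_pos_rep (by omega : 1 ≤ -n)
    have hn' : n = -((m:ℤ)+1) := by omega
    subst hn'
    rw [qseq0, if_neg (by omega), qseq_neg αi αo βi βo R σ γi γo hR m, Complex.conj_re]
    have h2 : |((-((m:ℤ)+1) : ℤ) : ℝ)| = (m:ℝ)+1 := by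
      push_cast; rw [abs_neg, abs_of_pos (by positivity)]
    rw [h2]
    exact q_re_pos αi αo βi βo R σ γi γo hαi hαo hR hσ m
  · simp [qseq0]
  · obtain ⟨m, rfl⟩ := int_pos_rep hn
    rw [qseq0, if_neg (by omega)]
    have h2 : |(((m:ℤ)+1 : ℤ) : ℝ)| = (m:ℝ)+1 := by
      push_cast; rw [abs_of_pos (by positivity)]
    rw [h2]
    exact q_re_pos αi αo βi βo R σ γi γo hαi hαo hR hσ m

end globalq

section globald
variable (αi αo βi βo R σ γi γo : ℝ)

lemma q0_diff (hαi : 0 < αi) (hαo : 0 < αo) (hR : 2 ≤ R) (hσ : 0 < σ) (n : ℤ) :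
    Complex.abs (qseq0 αi αo βi βo R σ γi γo (n+1) - qseq0 αi αo βi βo R σ γi γo n)
      ≤ K2C αi αo σ γi γo * (1+|(n:ℝ)|)^2 := by
  have hK := KqC_pos αi αo σ γi γo hαi hαo hσ
  have hc : (0:ℝ) < αo + αi := by linarith
  have hK2a : (0:ℝ) ≤ (|σ - 2*(γo - γi)| + 7*σ)/(αo+αi)
      + 8*αo*(|σ - 2*(γo - γi)| + σ)/(αo+αi)^2 := by positivity
  have hsplit : K2C αi αo σ γi γo = ((|σ - 2*(γo - γi)| + 7*σ)/(αo+αi)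
      + 8*αo*(|σ - 2*(γo - γi)| + σ)/(αo+αi)^2) + 8*KqC αi αo σ γi γo := by
    unfold K2C; ring
  rcases le_or_gt 1 n with hn | hn
  · -- n ≥ 1
    obtain ⟨m, rfl⟩ := int_pos_rep hn
    rw [qseq0, qseq0, if_neg (by omega), if_neg (by omega)]
    have h2 : |(((m:ℤ)+1 : ℤ) : ℝ)| = (m:ℝ)+1 := by
      push_cast; rw [abs_of_pos (by positivity)]
    rw [show ((m:ℤ)+1+1 : ℤ) = ((m:ℤ)+2 : ℤ) by ring, h2]
    have h1 := q_diff_pos αi αo βi βo R σ γi γo hαi hαo hR hσ m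
    calc Complex.abs _ ≤ ((|σ - 2*(γo - γi)| + 7*σ)/(αo+αi)
          + 8*αo*(|σ - 2*(γo - γi)| + σ)/(αo+αi)^2) * ((m:ℝ)+2)^2 := h1
      _ ≤ K2C αi αo σ γi γo * (1+((m:ℝ)+1))^2 := by
          rw [hsplit, show (1+((m:ℝ)+1)) = (m:ℝ)+2 by ring]
          nlinarith [sq_nonneg ((m:ℝ)+2), hK.le,
            mul_nonneg hK.le (sq_nonneg ((m:ℝ)+2))]
  rcases le_or_gt n (-2) with hn2 | hn2
  · -- n ≤ -2
    obtain ⟨m, hm⟩ := int_pos_rep (by omega : 1 ≤ -n-1)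
    have hn' : n = -((m:ℤ)+2) := by omega
    subst hn'
    rw [qseq0, qseq0, if_neg (by omega), if_neg (by omega),
      show (-((m:ℤ)+2)+1 : ℤ) = -((m:ℤ)+1) by ring,
      show (-((m:ℤ)+2) : ℤ) = -(((m+1:ℕ):ℤ)+1) by push_cast; ring,
      qseq_neg αi αo βi βo R σ γi γo hR m, qseq_neg αi αo βi βo R σ γi γo hR (m+1),
      ← map_sub, Complex.abs_conj]
    have h1 := q_diff_pos αi αo βi βo R σ γi γo hαi hαo hR hσ m
    rw [AbsoluteValue.map_sub]
    calc Complex.abs _ ≤ ((|σ - 2*(γo - γi)| + 7*σ)/(αo+αi)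
          + 8*αo*(|σ - 2*(γo - γi)| + σ)/(αo+αi)^2) * ((m:ℝ)+2)^2 := by
          rw [show (((m+1:ℕ):ℤ)+1 : ℤ) = ((m:ℤ)+2 : ℤ) by push_cast; ring]
          exact h1
      _ ≤ K2C αi αo σ γi γo * (1+|((-((m:ℤ)+2) : ℤ) : ℝ)|)^2 := by
          have h2 : |((-((m:ℤ)+2) : ℤ) : ℝ)| = (m:ℝ)+2 := by
            push_cast; rw [abs_neg, abs_of_pos (by positivity)]
          rw [hsplit, h2]
          nlinarith [sq_nonneg ((m:ℝ)+2), hK.le,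
            mul_nonneg hK.le (sq_nonneg ((m:ℝ)+2)), Nat.cast_nonneg (α := ℝ) m,
            mul_nonneg hK2a (sq_nonneg ((m:ℝ)+2))]
  · -- n = 0 or n = -1
    have hcases : n = 0 ∨ n = -1 := by omega
    have habs1 : Complex.abs (qseq αi αo βi βo R σ γi γo 1) ≤ KqC αi αo σ γi γo := by
      have := q_abs_pos' αi αo βi βo R σ γi γo hαi hαo hR hσ 0
      norm_num at this
      exact this
    rcases hcases with rfl | rfl
    · rw [qseq0, qseq0, if_pos rfl, if_neg (by omega)]
      simp only [sub_zero, zero_add]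
      calc Complex.abs (qseq αi αo βi βo R σ γi γo 1) ≤ KqC αi αo σ γi γo := habs1
        _ ≤ K2C αi αo σ γi γo * (1+|((0:ℤ):ℝ)|)^2 := by
            rw [hsplit]
            norm_num
            nlinarith [hK.le, hK2a]
    · rw [qseq0, qseq0, if_pos (by norm_num), if_neg (by omega)]
      rw [zero_sub, map_neg_eq_map]
      have : ((-1 : ℤ)) = -(((0:ℕ):ℤ)+1) := by norm_num
      rw [this, qseq_neg αi αo βi βo R σ γi γo hR 0, Complex.abs_conj]
      have h0 : Complex.abs (qseq αi αo βi βo R σ γi γo (((0:ℕ):ℤ)+1))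
          ≤ KqC αi αo σ γi γo := by
        have := q_abs_pos' αi αo βi βo R σ γi γo hαi hαo hR hσ 0
        norm_num at this ⊢
        exact this
      calc Complex.abs _ ≤ KqC αi αo σ γi γo := h0
        _ ≤ K2C αi αo σ γi γo * (1+|((-1:ℤ):ℝ)|)^2 := by
            rw [hsplit]
            norm_num
            nlinarith [hK.le, hK2a]

end globald

section globaldd
variable (αi αo βi βo R σ γi γo : ℝ)

lemma abs3 (a b c : ℂ) :
    Complex.abs (a - 2*b + c) ≤ Complex.abs a + 2*Complex.abs b + Complex.abs c := by
  calc Complex.abs (a - 2*b + c) ≤ Complex.abs (a - 2*b) + Complex.abs c :=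
        Complex.abs.add_le _ _
    _ ≤ (Complex.abs a + Complex.abs (2*b)) + Complex.abs c := by
        have := AbsoluteValue.sub_le_add Complex.abs a (2*b)
        linarith
    _ = Complex.abs a + 2*Complex.abs b + Complex.abs c := by
        rw [map_mul]
        simp [Complex.abs_two]

lemma q0_dd (hαi : 0 < αi) (hαo : 0 < αo) (hR : 2 ≤ R) (hσ : 0 < σ) (n : ℤ) :
    Complex.abs (qseq0 αi αo βi βo R σ γi γo (n+2) - 2 * qseq0 αi αo βi βo R σ γi γo (n+1)
        + qseq0 αi αo βi βo R σ γi γo n)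
      ≤ K3C αi αo σ γi γo * (1+|(n:ℝ)|) := by
  have hK := KqC_pos αi αo σ γi γo hαi hαo hσ
  have hc : (0:ℝ) < αo + αi := by linarith
  have hK3a : (0:ℝ) ≤ 6*σ/(αo+αi) + 24*αo*(|σ - 2*(γo - γi)| + σ)/(αo+αi)^2 := by positivity
  have hsplit : K3C αi αo σ γi γo = (6*σ/(αo+αi)
      + 24*αo*(|σ - 2*(γo - γi)| + σ)/(αo+αi)^2) + 108*KqC αi αo σ γi γo := by
    unfold K3C; ring
  -- crude bound for small |n| : each |q0 k| with |k| ≤ 2 is at most 8 * KqC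
  have hsmall : ∀ k : ℤ, |k| ≤ 2 → Complex.abs (qseq0 αi αo βi βo R σ γi γo k)
      ≤ 27 * KqC αi αo σ γi γo := by
    intro k hk
    have h1 := q0_abs αi αo βi βo R σ γi γo hαi hαo hR hσ k
    have h2 : |((k:ℤ):ℝ)| ≤ 2 := by exact_mod_cast hk
    calc Complex.abs _ ≤ KqC αi αo σ γi γo * (1+|((k:ℤ):ℝ)|)^3 := h1
      _ ≤ KqC αi αo σ γi γo * 27 := by
          apply mul_le_mul_of_nonneg_left _ hK.le
          have h3 : (1+|((k:ℤ):ℝ)|)^3 ≤ (1+2)^3 := by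
            apply pow_le_pow_left₀ (by positivity)
            linarith
          norm_num at h3
          linarith
      _ = 27 * KqC αi αo σ γi γo := by ring
  rcases le_or_gt 1 n with hn | hn
  · -- n ≥ 1
    obtain ⟨m, rfl⟩ := int_pos_rep hn
    rw [qseq0, qseq0, qseq0, if_neg (by omega), if_neg (by omega), if_neg (by omega)]
    have h2 : |(((m:ℤ)+1 : ℤ) : ℝ)| = (m:ℝ)+1 := by
      push_cast; rw [abs_of_pos (by positivity)]
    rw [show ((m:ℤ)+1+2 : ℤ) = ((m:ℤ)+3 : ℤ) by ring,
      show ((m:ℤ)+1+1 : ℤ) = ((m:ℤ)+2 : ℤ) by ring, h2]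
    have h1 := q_dd_pos αi αo βi βo R σ γi γo hαi hαo hR hσ m
    calc Complex.abs _ ≤ (6*σ/(αo+αi)
          + 24*αo*(|σ - 2*(γo - γi)| + σ)/(αo+αi)^2) * ((m:ℝ)+2) := h1
      _ ≤ K3C αi αo σ γi γo * (1+((m:ℝ)+1)) := by
          rw [hsplit, show (1+((m:ℝ)+1)) = (m:ℝ)+2 by ring]
          nlinarith [hK.le, Nat.cast_nonneg (α := ℝ) m]
  rcases le_or_gt n (-3) with hn2 | hn2
  · -- n ≤ -3
    obtain ⟨m, hm⟩ := int_pos_rep (by omega : 1 ≤ -n-2)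
    have hn' : n = -((m:ℤ)+3) := by omega
    subst hn'
    rw [qseq0, qseq0, qseq0, if_neg (by omega), if_neg (by omega), if_neg (by omega),
      show (-((m:ℤ)+3)+2 : ℤ) = -((m:ℤ)+1) by ring,
      show (-((m:ℤ)+3)+1 : ℤ) = -(((m+1:ℕ):ℤ)+1) by push_cast; ring,
      show (-((m:ℤ)+3) : ℤ) = -(((m+2:ℕ):ℤ)+1) by push_cast; ring,
      qseq_neg αi αo βi βo R σ γi γo hR m, qseq_neg αi αo βi βo R σ γi γo hR (m+1),
      qseq_neg αi αo βi βo R σ γi γo hR (m+2)]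
    rw [show (starRingEnd ℂ) (qseq αi αo βi βo R σ γi γo ((m:ℤ)+1))
          - 2 * (starRingEnd ℂ) (qseq αi αo βi βo R σ γi γo (((m+1:ℕ):ℤ)+1))
          + (starRingEnd ℂ) (qseq αi αo βi βo R σ γi γo (((m+2:ℕ):ℤ)+1))
        = (starRingEnd ℂ) (qseq αi αo βi βo R σ γi γo (((m+2:ℕ):ℤ)+1)
          - 2 * qseq αi αo βi βo R σ γi γo (((m+1:ℕ):ℤ)+1)
          + qseq αi αo βi βo R σ γi γo ((m:ℤ)+1)) by
      simp only [map_sub, map_add, map_mul, map_ofNat]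
      ring, Complex.abs_conj]
    have h1 := q_dd_pos αi αo βi βo R σ γi γo hαi hαo hR hσ m
    calc Complex.abs _ ≤ (6*σ/(αo+αi)
          + 24*αo*(|σ - 2*(γo - γi)| + σ)/(αo+αi)^2) * ((m:ℝ)+2) := by
          rw [show (((m+2:ℕ):ℤ)+1 : ℤ) = ((m:ℤ)+3 : ℤ) by push_cast; ring,
            show (((m+1:ℕ):ℤ)+1 : ℤ) = ((m:ℤ)+2 : ℤ) by push_cast; ring]
          exact h1
      _ ≤ K3C αi αo σ γi γo * (1+|((-((m:ℤ)+3) : ℤ) : ℝ)|) := by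
          have h2 : |((-((m:ℤ)+3) : ℤ) : ℝ)| = (m:ℝ)+3 := by
            push_cast; rw [abs_neg, abs_of_pos (by positivity)]
          rw [hsplit, h2]
          nlinarith [hK.le, Nat.cast_nonneg (α := ℝ) m, hK3a]
  · -- n ∈ {-2, -1, 0}
    have hb : ∀ k : ℤ, |k| ≤ 2 → ∀ k' : ℤ, |k'| ≤ 2 → ∀ k'' : ℤ, |k''| ≤ 2 →
        Complex.abs (qseq0 αi αo βi βo R σ γi γo k - 2 * qseq0 αi αo βi βo R σ γi γo k'
          + qseq0 αi αo βi βo R σ γi γo k'') ≤ 108 * KqC αi αo σ γi γo := by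
      intro k hk k' hk' k'' hk''
      have := abs3 (qseq0 αi αo βi βo R σ γi γo k) (qseq0 αi αo βi βo R σ γi γo k')
        (qseq0 αi αo βi βo R σ γi γo k'')
      have b1 := hsmall k hk
      have b2 := hsmall k' hk'
      have b3 := hsmall k'' hk''
      linarith
    have hfin : Complex.abs (qseq0 αi αo βi βo R σ γi γo (n+2)
        - 2 * qseq0 αi αo βi βo R σ γi γo (n+1) + qseq0 αi αo βi βo R σ γi γo n)
        ≤ 108 * KqC αi αo σ γi γo :=
      hb (n+2) (by rw [abs_le]; omega) (n+1) (by rw [abs_le]; omega) n (by rw [abs_le]; omega)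
    calc Complex.abs _ ≤ 108 * KqC αi αo σ γi γo := hfin
      _ ≤ K3C αi αo σ γi γo * 1 := by
          rw [hsplit]; nlinarith [hK.le, hK3a]
      _ ≤ K3C αi αo σ γi γo * (1+|((n:ℤ):ℝ)|) := by
          apply mul_le_mul_of_nonneg_left _ (by rw [hsplit]; nlinarith [hK.le, hK3a])
          have := abs_nonneg ((n:ℤ):ℝ)
          linarith

end globaldd


set_option maxHeartbeats 2000000
/-- There exists `λ* ∈ ℝ` such that, with `S_n^λ := λ·(λ − q_n)⁻¹`
(and `q_0 := 0`), the three suprema over nonzero integers `n` and over `λ` with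
`Re λ ≥ λ*` are finite: `sup |S_n^λ| < ∞`, `sup |n|·|S_{n+1}^λ − S_n^λ| < ∞`, and
`sup |n|²·|S_{n+2}^λ − 2S_{n+1}^λ + S_n^λ| < ∞`. -/
theorem statement17 (αi αo βi βo R σ γi γo : ℝ)
    (hαi : 0 < αi) (hαo : 0 < αo) (hβi : 0 ≤ βi) (hβo : 0 ≤ βo) (hR : 2 ≤ R)
    (hσ : 0 < σ) :
    ∃ lamStar C : ℝ, ∀ lam : ℂ, lamStar ≤ lam.re → ∀ n : ℤ, n ≠ 0 →
      ‖(lam * (lam - qseq0 αi αo βi βo R σ γi γo n)⁻¹)‖ ≤ C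
      ∧ (|n| : ℝ) * ‖(lam * (lam - qseq0 αi αo βi βo R σ γi γo (n + 1))⁻¹
          - lam * (lam - qseq0 αi αo βi βo R σ γi γo n)⁻¹)‖ ≤ C
      ∧ (|n| : ℝ) ^ 2 * ‖(lam * (lam - qseq0 αi αo βi βo R σ γi γo (n + 2))⁻¹
          - 2 * (lam * (lam - qseq0 αi αo βi βo R σ γi γo (n + 1))⁻¹)
          + lam * (lam - qseq0 αi αo βi βo R σ γi γo n)⁻¹)‖ ≤ C := by
  simp only [← Complex.abs_apply]
  have hc : (0:ℝ) < αo + αi := by linarith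
  set q : ℤ → ℂ := qseq0 αi αo βi βo R σ γi γo with hq
  set d : ℝ := σ - 2*(γo - γi) with hd
  set rmax : ℝ := 1/(αo+αi) with hrmax
  set rmin : ℝ := (αo+αi)/((2*αo+αi)^2+(βo-βi)^2) with hrmin
  have hrmin0 : 0 < rmin := by rw [hrmin]; positivity
  have hrmax0 : 0 < rmax := by rw [hrmax]; positivity
  set c0 : ℝ := rmin*σ/8 with hc0def
  have hc00 : 0 < c0 := by rw [hc0def]; positivity
  set Kq : ℝ := KqC αi αo σ γi γo with hKq
  set K2 : ℝ := K2C αi αo σ γi γo with hK2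
  set K3 : ℝ := K3C αi αo σ γi γo with hK3
  have hKq0 : 0 < Kq := KqC_pos αi αo σ γi γo hαi hαo hσ
  have hK20 : 0 < K2 := K2C_pos αi αo σ γi γo hαi hαo hσ
  have hK30 : 0 < K3 := K3C_pos αi αo σ γi γo hαi hαo hσ
  set a : ℝ := rmax * |d| with ha
  have ha0 : 0 ≤ a := by rw [ha]; positivity
  set lamStar : ℝ := rmin*σ/2 + a * Real.sqrt (a / (rmin*σ/2)) with hlamStar
  set C1 : ℝ := 1 + Kq/c0 with hC1
  have hC10 : 0 < C1 := by
    rw [hC1]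
    have := div_pos hKq0 hc00
    linarith
  set C : ℝ := C1 + C1*K2/c0 + 8*C1*K3/c0 + 40*C1*K2^2/c0^2 with hC
  clear_value C C1 lamStar a K3 K2 Kq c0 rmin rmax d q
  refine ⟨lamStar, C, ?_⟩
  intro lam hlam n hn
  -- the master denominator bound
  have hden : ∀ k : ℤ, c0 * (1+|(k:ℝ)|)^3 ≤ (lam - q k).re := by
    intro k
    set x : ℝ := |(k:ℝ)| with hx
    have hx0 : 0 ≤ x := abs_nonneg _
    have h1 : (q k).re ≤ rmax * |d| * x - rmin * σ * x^3 := by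
      rw [hq, hrmax, hrmin, hd, hx]
      exact q0_re αi αo βi βo R σ γi γo hαi hαo hR hσ k
    rw [← ha] at h1
    have h2 : a * x ≤ (rmin*σ/2) * x^3 + a * Real.sqrt (a/(rmin*σ/2)) :=
      ax_cube a (rmin*σ/2) x ha0 (by positivity) hx0
    have h3 : (1+x)^3 ≤ 4*(1+x^3) := cube_le x hx0
    have h4 : (lam - q k).re = lam.re - (q k).re := by
      rw [Complex.sub_re]
    rw [h4]
    have h5 : lamStar ≤ lam.re := hlam
    rw [hlamStar] at h5
    rw [hc0def]
    linarith [h1, h2, h5,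
      mul_le_mul_of_nonneg_left h3 (show (0:ℝ) ≤ rmin*σ/8 by nlinarith [mul_pos hrmin0 hσ])]
  have habs_den : ∀ k : ℤ, c0 * (1+|(k:ℝ)|)^3 ≤ Complex.abs (lam - q k) := by
    intro k
    exact le_trans (hden k) (Complex.re_le_norm _)
  have hy1 : ∀ k : ℤ, (1:ℝ) ≤ 1+|(k:ℝ)| := by
    intro k; have := abs_nonneg ((k:ℤ):ℝ); linarith
  have hpos : ∀ k : ℤ, 0 < Complex.abs (lam - q k) := fun k =>
    lt_of_lt_of_le (mul_pos hc00 (pow_pos (lt_of_lt_of_le one_pos (hy1 k)) 3)) (habs_den k)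
  have hne : ∀ k : ℤ, lam - q k ≠ 0 := by
    intro k h
    have := hpos k
    rw [h] at this
    simp at this
  -- the resolvent bound
  have hS : ∀ k : ℤ, Complex.abs (lam * (lam - q k)⁻¹) ≤ C1 := by
    intro k
    rw [map_mul, map_inv₀, ← div_eq_mul_inv, div_le_iff₀ (hpos k)]
    set Dk := Complex.abs (lam - q k) with hDk
    set x : ℝ := |(k:ℝ)| with hx
    have h1 : Complex.abs lam ≤ Dk + Kq*(1+x)^3 := by
      calc Complex.abs lam = Complex.abs ((lam - q k) + q k) := by ring_nf
        _ ≤ Dk + Complex.abs (q k) := Complex.abs.add_le _ _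
        _ ≤ Dk + Kq*(1+x)^3 := by
            have := q0_abs αi αo βi βo R σ γi γo hαi hαo hR hσ k
            rw [← hq, ← hKq] at this
            linarith
    have h2 : c0*(1+x)^3 ≤ Dk := habs_den k
    have h3 : Kq*(1+x)^3 = (Kq/c0) * (c0*(1+x)^3) := by field_simp
    have h4 : (Kq/c0) * (c0*(1+x)^3) ≤ (Kq/c0) * Dk :=
      mul_le_mul_of_nonneg_left h2 (le_of_lt (div_pos hKq0 hc00))
    calc Complex.abs lam ≤ Dk + Kq*(1+x)^3 := h1
      _ ≤ Dk + (Kq/c0) * Dk := by rw [h3] at h1 ⊢; linarith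
      _ = C1 * Dk := by rw [hC1]; ring
  have hCsum : C1 ≤ C ∧ C1*K2/c0 ≤ C ∧ 8*C1*K3/c0 + 40*C1*K2^2/c0^2 ≤ C := by
    have e1 : 0 < C1*K2/c0 := div_pos (mul_pos hC10 hK20) hc00
    have e2 : 0 < 8*C1*K3/c0 :=
      div_pos (mul_pos (mul_pos (by norm_num : (0:ℝ) < 8) hC10) hK30) hc00
    have e3 : 0 < 40*C1*K2^2/c0^2 :=
      div_pos (mul_pos (mul_pos (by norm_num : (0:ℝ) < 40) hC10) (pow_pos hK20 2))
        (pow_pos hc00 2)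
    refine ⟨?_, ?_, ?_⟩ <;> (rw [hC]; linarith [e1, e2, e3, hC10])
  refine ⟨le_trans (hS n) hCsum.1, ?_, ?_⟩
  · -- first difference
    have hne1 : lam - q (n+1) ≠ 0 := hne (n+1)
    have hne0 : lam - q n ≠ 0 := hne n
    have id2 : lam * (lam - q (n+1))⁻¹ - lam * (lam - q n)⁻¹
        = (lam * (lam - q (n+1))⁻¹) * ((lam - q n)⁻¹ * (q (n+1) - q n)) := by
      field_simp
      ring
    have split2 : Complex.abs ((lam * (lam - q (n+1))⁻¹) * ((lam - q n)⁻¹ * (q (n+1) - q n)))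
        = Complex.abs (lam * (lam - q (n+1))⁻¹)
          * ((Complex.abs (lam - q n))⁻¹ * Complex.abs (q (n+1) - q n)) := by
      rw [map_mul Complex.abs (lam * (lam - q (n+1))⁻¹),
        map_mul Complex.abs ((lam - q n)⁻¹), map_inv₀]
    rw [id2, split2]
    set x : ℝ := |(n:ℝ)| with hx
    have hx0 : 0 ≤ x := abs_nonneg _
    set y : ℝ := 1 + x with hy
    have hy0 : (1:ℝ) ≤ y := by rw [hy]; linarith
    have hy00 : (0:ℝ) < y := by linarith
    have hcy : (0:ℝ) < c0*y^3 := mul_pos hc00 (pow_pos hy00 3)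
    have b1 : Complex.abs (lam * (lam - q (n+1))⁻¹) ≤ C1 := hS (n+1)
    have b2 : (Complex.abs (lam - q n))⁻¹ ≤ (c0*y^3)⁻¹ := by
      apply inv_anti₀ hcy
      exact habs_den n
    have b3 : Complex.abs (q (n+1) - q n) ≤ K2*y^2 := by
      have := q0_diff αi αo βi βo R σ γi γo hαi hαo hR hσ n
      rw [← hq, ← hK2] at this
      exact this
    have step : x * (Complex.abs (lam * (lam - q (n+1))⁻¹)
          * ((Complex.abs (lam - q n))⁻¹ * Complex.abs (q (n+1) - q n)))
        ≤ x * (C1 * ((c0*y^3)⁻¹ * (K2*y^2))) := by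
      apply mul_le_mul_of_nonneg_left _ hx0
      apply mul_le_mul b1 _ (mul_nonneg (inv_nonneg.mpr (Complex.abs.nonneg _))
        (Complex.abs.nonneg _)) hC10.le
      apply mul_le_mul b2 b3 (Complex.abs.nonneg _) (le_of_lt (inv_pos.mpr hcy))
    have final : x * (C1 * ((c0*y^3)⁻¹ * (K2*y^2))) ≤ C1*K2/c0 := by
      have e1 : x * (C1 * ((c0*y^3)⁻¹ * (K2*y^2))) = (C1*K2/c0) * (x*y^2/y^3) := by
        field_simp
      rw [e1]
      have hxy : x ≤ y := by rw [hy]; linarith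
      have e2 : x*y^2/y^3 ≤ 1 := by
        rw [div_le_one (pow_pos hy00 3)]
        calc x*y^2 ≤ y*y^2 := mul_le_mul_of_nonneg_right hxy (pow_nonneg hy00.le 2)
          _ = y^3 := by ring
      have e3 : (0:ℝ) ≤ C1*K2/c0 := le_of_lt (div_pos (mul_pos hC10 hK20) hc00)
      calc (C1*K2/c0) * (x*y^2/y^3) ≤ (C1*K2/c0) * 1 := mul_le_mul_of_nonneg_left e2 e3
        _ = C1*K2/c0 := mul_one _
    linarith [step, final, hCsum.2.1]
  · -- second difference
    have hne2 : lam - q (n+2) ≠ 0 := hne (n+2)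
    have hne1 : lam - q (n+1) ≠ 0 := hne (n+1)
    have hne0 : lam - q n ≠ 0 := hne n
    have id3 : lam * (lam - q (n+2))⁻¹ - 2*(lam * (lam - q (n+1))⁻¹) + lam * (lam - q n)⁻¹
        = (lam * (lam - q (n+2))⁻¹) * ((lam - q (n+1))⁻¹ * (q (n+2) - 2*q (n+1) + q n)
          + (lam - q (n+1))⁻¹ * ((lam - q n)⁻¹ * ((q (n+1) - q n) * (q (n+2) - q n)))) := by
      field_simp
      ring
    rw [id3, map_mul]
    set x : ℝ := |(n:ℝ)| with hx
    have hx0 : 0 ≤ x := abs_nonneg _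
    set y : ℝ := 1 + x with hy
    have hy0 : (1:ℝ) ≤ y := by rw [hy]; linarith
    have hy00 : (0:ℝ) < y := by linarith
    have hcy : (0:ℝ) < c0*y^3 := mul_pos hc00 (pow_pos hy00 3)
    set y1 : ℝ := 1 + |((n+1 : ℤ):ℝ)| with hy1'
    have hy10 : (0:ℝ) < y1 := by
      rw [hy1']; have := abs_nonneg (((n+1:ℤ)):ℝ); linarith
    have hrel1 : y ≤ 2*y1 := by
      rw [hy, hy1', hx]
      push_cast
      have h1 : |(n:ℝ)| ≤ |(n:ℝ)+1| + 1 := by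
        calc |(n:ℝ)| = |((n:ℝ)+1) - 1| := by ring_nf
          _ ≤ |(n:ℝ)+1| + |(1:ℝ)| := abs_sub _ _
          _ = |(n:ℝ)+1| + 1 := by norm_num
      have h2 := abs_nonneg ((n:ℝ)+1)
      linarith
    have hrel2 : y1 ≤ 2*y := by
      rw [hy, hy1', hx]
      push_cast
      have h1 : |(n:ℝ)+1| ≤ |(n:ℝ)| + 1 := by
        calc |(n:ℝ)+1| ≤ |(n:ℝ)| + |(1:ℝ)| := abs_add_le _ _
          _ = |(n:ℝ)| + 1 := by norm_num
      have h2 := abs_nonneg ((n:ℝ))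
      linarith
    have bS : Complex.abs (lam * (lam - q (n+2))⁻¹) ≤ C1 := hS (n+2)
    -- inverse bounds
    have bu0 : (Complex.abs (lam - q n))⁻¹ ≤ (c0*y^3)⁻¹ := by
      apply inv_anti₀ hcy
      exact habs_den n
    have bu1 : (Complex.abs (lam - q (n+1)))⁻¹ ≤ 8*(c0*y^3)⁻¹ := by
      have hd1 : c0*y1^3 ≤ Complex.abs (lam - q (n+1)) := habs_den (n+1)
      have t1 : y^3 ≤ (2*y1)^3 := pow_le_pow_left₀ hy00.le hrel1 3
      have hkey : c0*y^3/8 ≤ c0*y1^3 := by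
        have t2 := mul_le_mul_of_nonneg_left t1 hc00.le
        rw [div_le_iff₀ (by norm_num : (0:ℝ) < 8)]
        calc c0*y^3 ≤ c0*(2*y1)^3 := t2
          _ = c0*y1^3*8 := by ring
      calc (Complex.abs (lam - q (n+1)))⁻¹ ≤ (c0*y^3/8)⁻¹ := by
            apply inv_anti₀ (div_pos hcy (by norm_num)) (le_trans hkey hd1)
        _ = 8*(c0*y^3)⁻¹ := by
            rw [div_eq_mul_inv, mul_comm, mul_inv, inv_inv]
    -- numerator bounds
    have bdd : Complex.abs (q (n+2) - 2*q (n+1) + q n) ≤ K3*y := by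
      have := q0_dd αi αo βi βo R σ γi γo hαi hαo hR hσ n
      rw [← hq, ← hK3] at this
      exact this
    have bd1 : Complex.abs (q (n+1) - q n) ≤ K2*y^2 := by
      have := q0_diff αi αo βi βo R σ γi γo hαi hαo hR hσ n
      rw [← hq, ← hK2] at this
      exact this
    have bd2 : Complex.abs (q (n+2) - q (n+1)) ≤ K2*y1^2 := by
      have := q0_diff αi αo βi βo R σ γi γo hαi hαo hR hσ (n+1)
      rw [← hq, ← hK2, show (n+1+1 : ℤ) = (n+2 : ℤ) by ring] at this
      exact this
    have bd20 : Complex.abs (q (n+2) - q n) ≤ 5*(K2*y^2) := by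
      have split : q (n+2) - q n = (q (n+2) - q (n+1)) + (q (n+1) - q n) := by ring
      have t1 : y1^2 ≤ 4*y^2 := by
        have t2 := pow_le_pow_left₀ hy10.le hrel2 2
        have t3 : (2*y)^2 = 4*y^2 := by ring
        linarith
      calc Complex.abs (q (n+2) - q n)
          ≤ Complex.abs (q (n+2) - q (n+1)) + Complex.abs (q (n+1) - q n) := by
            rw [split]; exact Complex.abs.add_le _ _
        _ ≤ K2*y1^2 + K2*y^2 := add_le_add bd2 bd1
        _ ≤ 5*(K2*y^2) := by
            have t2 := mul_le_mul_of_nonneg_left t1 hK20.le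
            linarith
    -- assemble
    have binner : Complex.abs ((lam - q (n+1))⁻¹ * (q (n+2) - 2*q (n+1) + q n)
          + (lam - q (n+1))⁻¹ * ((lam - q n)⁻¹ * ((q (n+1) - q n) * (q (n+2) - q n))))
        ≤ (8*(c0*y^3)⁻¹) * (K3*y)
          + (8*(c0*y^3)⁻¹) * ((c0*y^3)⁻¹ * ((K2*y^2) * (5*(K2*y^2)))) := by
      calc Complex.abs _
          ≤ Complex.abs ((lam - q (n+1))⁻¹ * (q (n+2) - 2*q (n+1) + q n))
            + Complex.abs ((lam - q (n+1))⁻¹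
              * ((lam - q n)⁻¹ * ((q (n+1) - q n) * (q (n+2) - q n)))) :=
            Complex.abs.add_le _ _
        _ ≤ (8*(c0*y^3)⁻¹) * (K3*y)
            + (8*(c0*y^3)⁻¹) * ((c0*y^3)⁻¹ * ((K2*y^2) * (5*(K2*y^2)))) := by
            apply add_le_add
            · rw [map_mul, map_inv₀]
              apply mul_le_mul bu1 bdd (Complex.abs.nonneg _) (by positivity)
            · rw [map_mul, map_inv₀, map_mul, map_inv₀, map_mul]
              apply mul_le_mul bu1 _ (mul_nonneg (inv_nonneg.mpr (Complex.abs.nonneg _))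
                (mul_nonneg (Complex.abs.nonneg _) (Complex.abs.nonneg _))) (by positivity)
              apply mul_le_mul bu0 _ (mul_nonneg (Complex.abs.nonneg _)
                (Complex.abs.nonneg _)) (le_of_lt (inv_pos.mpr hcy))
              apply mul_le_mul bd1 bd20 (Complex.abs.nonneg _) (by positivity)
    have step : x^2 * (Complex.abs (lam * (lam - q (n+2))⁻¹)
          * Complex.abs ((lam - q (n+1))⁻¹ * (q (n+2) - 2*q (n+1) + q n)
            + (lam - q (n+1))⁻¹ * ((lam - q n)⁻¹ * ((q (n+1) - q n) * (q (n+2) - q n)))))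
        ≤ x^2 * (C1 * ((8*(c0*y^3)⁻¹) * (K3*y)
            + (8*(c0*y^3)⁻¹) * ((c0*y^3)⁻¹ * ((K2*y^2) * (5*(K2*y^2)))))) := by
      apply mul_le_mul_of_nonneg_left _ (by positivity)
      exact mul_le_mul bS binner (Complex.abs.nonneg _) hC10.le
    have final : x^2 * (C1 * ((8*(c0*y^3)⁻¹) * (K3*y)
          + (8*(c0*y^3)⁻¹) * ((c0*y^3)⁻¹ * ((K2*y^2) * (5*(K2*y^2))))))
        ≤ 8*C1*K3/c0 + 40*C1*K2^2/c0^2 := by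
      have e1 : x^2 * (C1 * ((8*(c0*y^3)⁻¹) * (K3*y)
            + (8*(c0*y^3)⁻¹) * ((c0*y^3)⁻¹ * ((K2*y^2) * (5*(K2*y^2))))))
          = (8*C1*K3/c0) * (x^2*y/y^3) + (40*C1*K2^2/c0^2) * (x^2*y^4/y^6) := by
        field_simp
        ring
      rw [e1]
      have hxy : x ≤ y := by rw [hy]; linarith
      have hx2 : x^2 ≤ y^2 := pow_le_pow_left₀ hx0 hxy 2
      have e2 : x^2*y/y^3 ≤ 1 := by
        rw [div_le_one (pow_pos hy00 3)]
        calc x^2*y ≤ y^2*y := mul_le_mul_of_nonneg_right hx2 hy00.le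
          _ = y^3 := by ring
      have e3 : x^2*y^4/y^6 ≤ 1 := by
        rw [div_le_one (pow_pos hy00 6)]
        calc x^2*y^4 ≤ y^2*y^4 := mul_le_mul_of_nonneg_right hx2 (pow_nonneg hy00.le 4)
          _ = y^6 := by ring
      have e4 : (0:ℝ) ≤ 8*C1*K3/c0 :=
        le_of_lt (div_pos (mul_pos (mul_pos (by norm_num : (0:ℝ) < 8) hC10) hK30) hc00)
      have e5 : (0:ℝ) ≤ 40*C1*K2^2/c0^2 :=
        le_of_lt (div_pos (mul_pos (mul_pos (by norm_num : (0:ℝ) < 40) hC10)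
          (pow_pos hK20 2)) (pow_pos hc00 2))
      have f1 := mul_le_mul_of_nonneg_left e2 e4
      have f2 := mul_le_mul_of_nonneg_left e3 e5
      linarith
    linarith [step, final, hCsum.2.2]
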